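/- Let p be an odd prime, n ≥ 1, and m = pⁿ. Let (a,b,c,d) be a Descartes quadruple with p ∤ a+b, and let f(x) = (a+b)x² − (a+b+c−d)x + c be the pinch polynomial. Then the image of f on ℤ/mℤ equals { (a+b)·q − a·b·(a+b)⁻¹ : q a square in ℤ/mℤ }, where (a+b)⁻¹ is the inverse of a+b modulo m; in particular this image has the same cardinality as the set of squares in ℤ/mℤ. -/

import Mathlib

private lemma unit_of_not_dvd (p n : ℕ) (hp : p.Prime) (k : ℤ)
    (h : ¬ (p : ℤ) ∣ k) : IsUnit ((k : ZMod (p ^ n))) := by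
  have hp' : Prime (p : ℤ) := Nat.prime_iff_prime_int.mp hp
  have hcop : IsCoprime ((p : ℤ) ^ n) k := (hp'.coprime_iff_not_dvd.mpr h).pow_left
  obtain ⟨x, y, hxy⟩ := hcop
  refine IsUnit.of_mul_eq_one ((y : ZMod (p ^ n))) ?_
  have hc := congrArg (Int.cast : ℤ → ZMod (p ^ n)) hxy
  push_cast at hc
  have hp0 : ((p : ZMod (p ^ n))) ^ n = 0 := by
    rw [← Nat.cast_pow, ZMod.natCast_self]
  rw [hp0, mul_zero, zero_add, mul_comm] at hc
  exact hc

/-- if `p ∤ a+b`, the image of the pinch polynomial modulo `m = pⁿ` equals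
`(a+b)·Q − ab·(a+b)⁻¹` where `Q` is the set of squares, and has the same cardinality as `Q`. -/
theorem stmt_6 (p : ℕ) (hp : p.Prime) (hodd : Odd p) (n : ℕ) (hn : 1 ≤ n)
    (a b c d : ℤ)
    (hDesc : 2 * (a ^ 2 + b ^ 2 + c ^ 2 + d ^ 2) = (a + b + c + d) ^ 2)
    (hab : ¬ (p : ℤ) ∣ (a + b)) :
    {y : ZMod (p ^ n) | ∃ x : ZMod (p ^ n),
        ((a + b : ℤ) : ZMod (p ^ n)) * x ^ 2 - ((a + b + c - d : ℤ) : ZMod (p ^ n)) * x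
          + ((c : ℤ) : ZMod (p ^ n)) = y}
      = {y : ZMod (p ^ n) | ∃ q : ZMod (p ^ n), (∃ z : ZMod (p ^ n), q = z ^ 2) ∧
          y = ((a + b : ℤ) : ZMod (p ^ n)) * q
              - ((a * b : ℤ) : ZMod (p ^ n)) * (((a + b : ℤ) : ZMod (p ^ n)))⁻¹} ∧
    {y : ZMod (p ^ n) | ∃ x : ZMod (p ^ n),
        ((a + b : ℤ) : ZMod (p ^ n)) * x ^ 2 - ((a + b + c - d : ℤ) : ZMod (p ^ n)) * x
          + ((c : ℤ) : ZMod (p ^ n)) = y}.ncard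
      = {q : ZMod (p ^ n) | ∃ z : ZMod (p ^ n), q = z ^ 2}.ncard := by
  set m := p ^ n with hm
  set u : ZMod m := ((a + b : ℤ) : ZMod m) with hu_def
  set s : ZMod m := ((a + b + c - d : ℤ) : ZMod m) with hs_def
  set c' : ZMod m := ((c : ℤ) : ZMod m) with hc_def
  set ab' : ZMod m := ((a * b : ℤ) : ZMod m) with hab_def
  -- units
  have hu : IsUnit u := unit_of_not_dvd p n hp _ hab
  have h2dvd : ¬ (p : ℤ) ∣ 2 := by
    intro h
    have hpd : p ∣ 2 := by exact_mod_cast h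
    have hp2 : p = 2 := (Nat.prime_dvd_prime_iff_eq hp Nat.prime_two).mp hpd
    rcases hodd with ⟨k, hk⟩
    omega
  have h2 : IsUnit ((2 : ℤ) : ZMod m) := unit_of_not_dvd p n hp 2 h2dvd
  have h2' : IsUnit (2 : ZMod m) := by simpa using h2
  set iu : ZMod m := u⁻¹ with hiu_def
  set i2 : ZMod m := (2 : ZMod m)⁻¹ with hi2_def
  have hu1 : u * iu = 1 := ZMod.mul_inv_of_unit u hu
  have h21 : (2 : ZMod m) * i2 = 1 := ZMod.mul_inv_of_unit _ h2'
  -- Descartes identity cast to `ZMod m`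
  have hZint : (a + b + c - d) ^ 2 = 4 * (a * b) + 4 * c * (a + b) := by
    linear_combination hDesc
  have hs : s ^ 2 = 4 * ab' + 4 * c' * u := by
    have := congrArg (Int.cast : ℤ → ZMod m) hZint
    push_cast at this
    simpa [hs_def, hab_def, hc_def, hu_def] using this
  -- completing the square
  set t : ZMod m := s * i2 * iu with ht_def
  have ht : 2 * u * t = s := by
    rw [ht_def]
    linear_combination (s * 2 * i2) * hu1 + s * h21
  have hut : u * t ^ 2 = ab' * iu + c' := by
    rw [ht_def]
    linear_combination (u * i2 ^ 2 * iu ^ 2) * hs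
      + (ab' * iu * (2 * i2) ^ 2 + c' * (2 * i2) ^ 2 * (u * iu + 1)) * hu1
      + (ab' * iu * (2 * i2 + 1) + c' * (2 * i2 + 1)) * h21
  have hkey : ∀ x : ZMod m, u * x ^ 2 - s * x + c' = u * (x - t) ^ 2 - ab' * iu := by
    intro x
    linear_combination x * ht - hut
  have hset :
      {y : ZMod m | ∃ x : ZMod m, u * x ^ 2 - s * x + c' = y}
        = {y : ZMod m | ∃ q : ZMod m, (∃ z : ZMod m, q = z ^ 2) ∧
            y = u * q - ab' * iu} := by
    ext y
    constructor
    · rintro ⟨x, hx⟩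
      exact ⟨(x - t) ^ 2, ⟨x - t, rfl⟩, by rw [← hx, hkey x]⟩
    · rintro ⟨q, ⟨z, hz⟩, hy⟩
      refine ⟨z + t, ?_⟩
      rw [hkey (z + t), hy, hz]
      ring_nf
  refine ⟨hset, ?_⟩
  rw [hset]
  have himg : {y : ZMod m | ∃ q : ZMod m, (∃ z : ZMod m, q = z ^ 2) ∧
      y = u * q - ab' * iu}
      = (fun q => u * q - ab' * iu) '' {q : ZMod m | ∃ z : ZMod m, q = z ^ 2} := by
    ext y
    simp only [Set.mem_setOf_eq, Set.mem_image]
    constructor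
    · rintro ⟨q, hq, hy⟩; exact ⟨q, hq, hy.symm⟩
    · rintro ⟨q, hq, hy⟩; exact ⟨q, hq, hy.symm⟩
  rw [himg]
  apply Set.ncard_image_of_injective
  intro q1 q2 h
  have huq : u * q1 = u * q2 := by linear_combination h
  exact hu.mul_left_cancel huq
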